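/- Let P_F be a forward policy with P_F(s'|s) > 0 for every edge s→s' of G, and let Z > 0. Then F(s) > 0 for every state s that lies on some complete trajectory—in fact for every state s, since in G every state lies on a complete trajectory—and the induced backward policy P_B^F(s|s') := F(s→s')/F(s') is a backward policy (for each noninitial s' it is a probability distribution on the parents of s'). Moreover H[P_F] = Σ_{complete trajectories τ = (t₀→⋯→t_D)} P_F(τ)·Σ_{i=1}^{D} H[P_B^F(·|t_i)] + log Z − (1/Z)·Σ_{x∈X} F(x)·log F(x). -/

import Mathlib

open scoped BigOperators Classical

/-- The GFlowNet state space `S = {0,1,⊘}^D`: functions from `Fin D` to `Option Bool`,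
with `none` denoting the unspecified entry `⊘`. -/
abbrev GState (D : ℕ) := Fin D → Option Bool

/-- The initial state `s₀`, with all entries `⊘`. -/
def initState (D : ℕ) : GState D := fun _ => none

/-- `s'` is a child of `s` (edge `s → s'` of the DAG `G`): `s'` is obtained from `s`
by changing exactly one `⊘`-entry of `s` to `0` or `1`. -/
def IsChild {D : ℕ} (s s' : GState D) : Prop :=
  ∃ (i : Fin D) (b : Bool), s i = none ∧ s' = Function.update s i (some b)

/-- Terminal states: no `⊘`-entry. -/
def IsTerminal {D : ℕ} (s : GState D) : Prop := ∀ i, s i ≠ none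

/-- The embedding of `X = {0,1}^D` as the set of terminal states. -/
def ofX {D : ℕ} (x : Fin D → Bool) : GState D := fun i => some (x i)

/-- `|s|`: the number of non-`⊘` entries of `s`. -/
def numAssigned {D : ℕ} (s : GState D) : ℕ :=
  (Finset.univ.filter fun i => s i ≠ none).card

/-- A complete trajectory `τ = (t₀ → t₁ → ⋯ → t_n)`, encoded as the list of its states:
it starts at `s₀`, each consecutive pair is an edge of `G`, and it ends at a terminal state. -/
def IsCompleteTraj {D : ℕ} (l : List (GState D)) : Prop :=
  l.head? = some (initState D) ∧ l.Chain' IsChild ∧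
    ∃ s, l.getLast? = some s ∧ IsTerminal s

/-- The trajectory `l` ends at the terminal state corresponding to `x ∈ X`. -/
def EndsAt {D : ℕ} (l : List (GState D)) (x : Fin D → Bool) : Prop :=
  l.getLast? = some (ofX x)

/-- `PF` is a forward policy: for every nonterminal `s`, `PF s ·` is a probability
distribution supported on the children of `s` (`PF s s'` is `P_F(s'|s)`). -/
def IsForwardPolicy {D : ℕ} (PF : GState D → GState D → ℝ) : Prop :=
  ∀ s : GState D, ¬ IsTerminal s →
    (∀ s', 0 ≤ PF s s') ∧ (∀ s', PF s s' ≠ 0 → IsChild s s') ∧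
    (∑ s' : GState D, PF s s' = 1)

/-- `PB` is a backward policy: for every noninitial `s'`, `PB s' ·` is a probability
distribution supported on the parents of `s'` (`PB s' s` is `P_B(s|s')`). -/
def IsBackwardPolicy {D : ℕ} (PB : GState D → GState D → ℝ) : Prop :=
  ∀ s' : GState D, s' ≠ initState D →
    (∀ s, 0 ≤ PB s' s) ∧ (∀ s, PB s' s ≠ 0 → IsChild s s') ∧
    (∑ s : GState D, PB s' s = 1)

/-- `P_F(τ) = ∏_{i<n} P_F(t_{i+1}|t_i)` along a trajectory. -/
def trajPF {D : ℕ} (PF : GState D → GState D → ℝ) (l : List (GState D)) : ℝ :=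
  ((l.zip l.tail).map fun p => PF p.1 p.2).prod

/-- `P_B(τ|x) = ∏_{i<n} P_B(t_i|t_{i+1})` along a trajectory. -/
def trajPB {D : ℕ} (PB : GState D → GState D → ℝ) (l : List (GState D)) : ℝ :=
  ((l.zip l.tail).map fun p => PB p.2 p.1).prod

/-- Trajectory balance for reward `R`: `Z·P_F(τ) = R(x)·P_B(τ|x)` for every complete
trajectory `τ` ending at `x`. -/
def TrajBalance {D : ℕ} (PF PB : GState D → GState D → ℝ) (Z : ℝ)
    (R : (Fin D → Bool) → ℝ) : Prop :=
  ∀ (l : List (GState D)) (x : Fin D → Bool),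
    IsCompleteTraj l → EndsAt l x → Z * trajPF PF l = R x * trajPB PB l

/-- The terminating probability `P_T(x)`: the sum of `P_F(τ)` over all complete
trajectories ending at `x`. -/
noncomputable def PT {D : ℕ} (PF : GState D → GState D → ℝ) (x : Fin D → Bool) : ℝ :=
  ∑ᶠ l ∈ {l : List (GState D) | IsCompleteTraj l ∧ EndsAt l x}, trajPF PF l

/-- A path in `G` from `s` to `t`, encoded as the list of its states. -/
def IsPath {D : ℕ} (l : List (GState D)) (s t : GState D) : Prop :=
  l.Chain' IsChild ∧ l.head? = some s ∧ l.getLast? = some t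
/-- The state flow `F(s)`: sum of `F(τ) = Z·P_F(τ)` over complete trajectories through `s`. -/
noncomputable def stateFlow {D : ℕ} (PF : GState D → GState D → ℝ) (Z : ℝ)
    (s : GState D) : ℝ :=
  ∑ᶠ l ∈ {l : List (GState D) | IsCompleteTraj l ∧ s ∈ l}, Z * trajPF PF l

/-- The edge flow `F(s→s')`: sum of `F(τ) = Z·P_F(τ)` over complete trajectories
containing the edge `s → s'`. -/
noncomputable def edgeFlow {D : ℕ} (PF : GState D → GState D → ℝ) (Z : ℝ)
    (s s' : GState D) : ℝ :=
  ∑ᶠ l ∈ {l : List (GState D) | IsCompleteTraj l ∧ (s, s') ∈ l.zip l.tail}, Z * trajPF PF l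

/-- The Shannon entropy `H[P_F(·|s)]` of the forward policy at `s` (natural log,
with `0·log 0 = 0`). -/
noncomputable def stepEntropyF {D : ℕ} (PF : GState D → GState D → ℝ) (s : GState D) : ℝ :=
  ∑ s' : GState D, Real.negMulLog (PF s s')

/-- The entropy of the flow determined by `P_F`:
`H[P_F] = Σ_τ P_F(τ) · Σ_{i<n} H[P_F(·|t_i)]`. -/
noncomputable def flowEntropy {D : ℕ} (PF : GState D → GState D → ℝ) : ℝ :=
  ∑ᶠ l ∈ {l : List (GState D) | IsCompleteTraj l},
    trajPF PF l * (l.dropLast.map (stepEntropyF PF)).sum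

/-- The uniform backward policy `P_B°(s|s') = 1/|s'|` for each parent `s` of `s'`. -/
noncomputable def uniformBackward (D : ℕ) : GState D → GState D → ℝ :=
  fun s' s => if IsChild s s' then 1 / (numAssigned s' : ℝ) else 0


section Aux

open Finset in
lemma numAssigned_update_some {D : ℕ} {s : GState D} {i : Fin D} (h : s i = none) (b : Bool) :
    numAssigned (Function.update s i (some b)) = numAssigned s + 1 := by
  unfold numAssigned
  have : (univ.filter fun j => Function.update s i (some b) j ≠ none)
      = insert i (univ.filter fun j => s j ≠ none) := by
    ext j
    by_cases hj : j = i
    · subst hj; simp [Function.update_self]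
    · simp [Function.update_of_ne hj, hj]
  rw [this, card_insert_of_notMem (by simp [h])]

lemma IsChild.numAssigned_eq {D : ℕ} {s s' : GState D} (h : IsChild s s') :
    numAssigned s' = numAssigned s + 1 := by
  obtain ⟨i, b, h1, rfl⟩ := h
  exact numAssigned_update_some h1 b

lemma numAssigned_le {D : ℕ} (s : GState D) : numAssigned s ≤ D := by
  simpa [numAssigned] using (Finset.card_filter_le Finset.univ _).trans (by simp)

lemma isTerminal_iff_numAssigned {D : ℕ} {s : GState D} : IsTerminal s ↔ numAssigned s = D := by
  constructor
  · intro h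
    have : (Finset.univ.filter fun j => s j ≠ none) = Finset.univ := by
      ext j; simpa using h j
    simp [numAssigned, this]
  · intro h i
    have : (Finset.univ.filter fun j => s j ≠ none) = Finset.univ :=
      Finset.eq_univ_of_card _ (by simpa [numAssigned] using h)
    have := Finset.mem_filter.mp (this ▸ Finset.mem_univ i)
    exact this.2

lemma numAssigned_eq_zero_iff {D : ℕ} {s : GState D} :
    numAssigned s = 0 ↔ s = initState D := by
  constructor
  · intro h
    funext i
    by_contra hi
    have : i ∈ Finset.univ.filter fun j => s j ≠ none := by
      simp only [Finset.mem_filter, Finset.mem_univ, true_and]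
      intro hn; exact hi (by simp [hn, initState])
    simpa [numAssigned, Finset.card_eq_zero.mp h] using this
  · rintro rfl
    simp [numAssigned, initState]

lemma numAssigned_initState (D : ℕ) : numAssigned (initState D) = 0 :=
  numAssigned_eq_zero_iff.mpr rfl

lemma initState_not_terminal {D : ℕ} (hD : 1 ≤ D) : ¬ IsTerminal (initState D) := by
  intro h
  have := isTerminal_iff_numAssigned.mp h
  rw [numAssigned_initState] at this
  omega

lemma isTerminal_iff_ofX {D : ℕ} {s : GState D} : IsTerminal s ↔ ∃ x, s = ofX x := by
  constructor
  · intro h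
    refine ⟨fun i => (s i).getD false, funext fun i => ?_⟩
    cases hi : s i with
    | none => exact absurd hi (h i)
    | some b => simp [ofX, hi]
  · rintro ⟨x, rfl⟩ i
    simp [ofX]

lemma ofX_injective {D : ℕ} : Function.Injective (ofX (D := D)) := by
  intro x y h
  funext i
  have := congrFun h i
  simpa [ofX] using this

lemma IsTerminal.not_isChild {D : ℕ} {s s' : GState D} (h : IsTerminal s) : ¬ IsChild s s' := by
  rintro ⟨i, b, h1, -⟩
  exact h i h1

lemma not_isChild_initState {D : ℕ} {s : GState D} : ¬ IsChild s (initState D) := by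
  intro h
  have := h.numAssigned_eq
  rw [numAssigned_initState] at this
  omega

lemma IsChild.not_isTerminal {D : ℕ} {s s' : GState D} (h : IsChild s s') : ¬ IsTerminal s := by
  rintro ht
  exact ht.not_isChild h

end Aux

section ListAux

variable {α : Type*}

lemma mem_zip_tail_iff {l : List α} {a b : α} :
    (a, b) ∈ l.zip l.tail ↔ ∃ (i : ℕ) (h : i + 1 < l.length), l[i] = a ∧ l[i+1] = b := by
  rw [List.mem_iff_getElem]
  constructor
  · rintro ⟨i, hi, hab⟩
    have hi' : i + 1 < l.length := by
      simp only [List.length_zip, List.length_tail] at hi; omega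
    refine ⟨i, hi', ?_, ?_⟩
    · have := congrArg Prod.fst hab
      simpa [List.getElem_zip] using this
    · have := congrArg Prod.snd hab
      simp only [List.getElem_zip, List.getElem_tail] at this
      exact this
  · rintro ⟨i, hi, ha, hb⟩
    refine ⟨i, ?_, ?_⟩
    · simp only [List.length_zip, List.length_tail]; omega
    · simp [List.getElem_zip, List.getElem_tail, ha, hb]

lemma rel_of_mem_zip_tail {R : α → α → Prop} {l : List α} (hc : l.Chain' R) {a b : α}
    (h : (a, b) ∈ l.zip l.tail) : R a b := by
  obtain ⟨i, hi, ha, hb⟩ := mem_zip_tail_iff.mp h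
  subst ha hb
  exact List.isChain_iff_getElem.mp hc i (by omega)

lemma exists_mem_zip_tail_of_mem_tail {l : List α} {b : α} (h : b ∈ l.tail) :
    ∃ a, (a, b) ∈ l.zip l.tail := by
  obtain ⟨i, hi, hb⟩ := List.mem_iff_getElem.mp h
  have hi' : i + 1 < l.length := by simp only [List.length_tail] at hi; omega
  exact ⟨l[i], mem_zip_tail_iff.mpr ⟨i, hi', rfl, by rw [← List.getElem_tail]; exact hb⟩⟩

lemma exists_mem_zip_tail_of_mem_dropLast {l : List α} {a : α} (h : a ∈ l.dropLast) :
    ∃ b, (a, b) ∈ l.zip l.tail := by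
  obtain ⟨i, hi, ha⟩ := List.mem_iff_getElem.mp h
  have hi' : i + 1 < l.length := by simp only [List.length_dropLast] at hi; omega
  exact ⟨l[i+1], mem_zip_tail_iff.mpr ⟨i, hi', by rw [← List.getElem_dropLast]; exact ha, rfl⟩⟩

lemma mem_dropLast_of_mem_zip_tail {l : List α} {a b : α} (h : (a, b) ∈ l.zip l.tail) :
    a ∈ l.dropLast := by
  obtain ⟨i, hi, ha, hb⟩ := mem_zip_tail_iff.mp h
  rw [List.mem_iff_getElem]
  exact ⟨i, by simp only [List.length_dropLast]; omega, by rw [List.getElem_dropLast]; exact ha⟩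

lemma mem_tail_of_mem_zip_tail {l : List α} {a b : α} (h : (a, b) ∈ l.zip l.tail) :
    b ∈ l.tail := by
  obtain ⟨i, hi, ha, hb⟩ := mem_zip_tail_iff.mp h
  rw [List.mem_iff_getElem]
  exact ⟨i, by simp only [List.length_tail]; omega, by rw [List.getElem_tail]; exact hb⟩

lemma snd_unique_of_mem_zip_tail {l : List α} (hl : l.Nodup) {a b b' : α}
    (h : (a, b) ∈ l.zip l.tail) (h' : (a, b') ∈ l.zip l.tail) : b = b' := by
  obtain ⟨i, hi, ha, hb⟩ := mem_zip_tail_iff.mp h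
  obtain ⟨j, hj, ha', hb'⟩ := mem_zip_tail_iff.mp h'
  have hij : i = j := (List.Nodup.getElem_inj_iff hl (hi := by omega) (hj := by omega)).mp
      (ha.trans ha'.symm)
  subst hij hb hb'; rfl

lemma fst_unique_of_mem_zip_tail {l : List α} (hl : l.Nodup) {a a' b : α}
    (h : (a, b) ∈ l.zip l.tail) (h' : (a', b) ∈ l.zip l.tail) : a = a' := by
  obtain ⟨i, hi, ha, hb⟩ := mem_zip_tail_iff.mp h
  obtain ⟨j, hj, ha', hb'⟩ := mem_zip_tail_iff.mp h'
  have : i + 1 = j + 1 := (List.Nodup.getElem_inj_iff hl (hi := by omega) (hj := by omega)).mp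
      (hb.trans hb'.symm)
  have hij : i = j := by omega
  subst hij ha ha'; rfl

end ListAux

section ChainAux

variable {D : ℕ}

lemma List.Chain'.isChild_nodup {l : List (GState D)} (h : l.Chain' IsChild) : l.Nodup := by
  have h2 : l.Chain' (fun a b => numAssigned a < numAssigned b) :=
    h.imp fun a b hab => by rw [hab.numAssigned_eq]; omega
  have : Trans (fun a b : GState D => numAssigned a < numAssigned b)
      (fun a b : GState D => numAssigned a < numAssigned b)
      (fun a b : GState D => numAssigned a < numAssigned b) :=
    ⟨Nat.lt_trans⟩
  have hp : l.Pairwise (fun a b => numAssigned a < numAssigned b) :=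
    List.isChain_iff_pairwise.mp h2
  exact hp.imp fun {a b} hab => by intro hab'; subst hab'; omega

lemma List.Chain'.isChild_length {l : List (GState D)} (h : l.Chain' IsChild) :
    l.length ≤ D + 1 := by
  have h2 : l.Chain' (fun a b => numAssigned a < numAssigned b) :=
    h.imp fun a b hab => by rw [hab.numAssigned_eq]; omega
  have : Trans (fun a b : GState D => numAssigned a < numAssigned b)
      (fun a b : GState D => numAssigned a < numAssigned b)
      (fun a b : GState D => numAssigned a < numAssigned b) :=
    ⟨Nat.lt_trans⟩
  have hp : (l.map numAssigned).Pairwise (· < ·) := by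
    rw [List.pairwise_map]
    exact List.isChain_iff_pairwise.mp h2
  have hnd : (l.map numAssigned).Nodup := hp.imp fun {a b} hab => Nat.ne_of_lt hab
  have hsub : (l.map numAssigned).toFinset ⊆ Finset.range (D + 1) := by
    intro n hn
    simp only [List.mem_toFinset, List.mem_map] at hn
    obtain ⟨s, -, rfl⟩ := hn
    simp only [Finset.mem_range]
    exact Nat.lt_succ_of_le (numAssigned_le s)
  have := Finset.card_le_card hsub
  rwa [List.toFinset_card_of_nodup hnd, Finset.card_range, List.length_map] at this

end ChainAux

section PathSets

variable {D : ℕ}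

/-- Terminal paths starting at `s`. -/
def PathsT (s : GState D) : Set (List (GState D)) :=
  {l | l.Chain' IsChild ∧ l.head? = some s ∧ ∃ t, l.getLast? = some t ∧ IsTerminal t}

lemma isCompleteTraj_iff_mem_pathsT {l : List (GState D)} :
    IsCompleteTraj l ↔ l ∈ PathsT (initState D) := by
  unfold IsCompleteTraj PathsT
  simp only [Set.mem_setOf_eq]
  tauto

/-- Paths from the initial state to `s`. -/
def Pre (s : GState D) : Set (List (GState D)) := {l | IsPath l (initState D) s}

lemma finite_of_chain' {S : Set (List (GState D))} (h : ∀ l ∈ S, l.Chain' IsChild) :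
    S.Finite :=
  (List.finite_length_le (α := GState D) (D + 1)).subset fun l hl => (h l hl).isChild_length

noncomputable def pathF (s : GState D) : Finset (List (GState D)) :=
  (finite_of_chain' (S := PathsT s) fun _ hl => hl.1).toFinset

@[simp] lemma mem_pathF {s : GState D} {l : List (GState D)} :
    l ∈ pathF s ↔ l ∈ PathsT s := Set.Finite.mem_toFinset _

noncomputable def preF (s : GState D) : Finset (List (GState D)) :=
  (finite_of_chain' (S := Pre s) fun _ hl => hl.1).toFinset

@[simp] lemma mem_preF {s : GState D} {l : List (GState D)} :
    l ∈ preF s ↔ IsPath l (initState D) s := Set.Finite.mem_toFinset _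

noncomputable def compF (D : ℕ) : Finset (List (GState D)) :=
  (finite_of_chain' (S := {l | IsCompleteTraj l}) fun _ hl => hl.2.1).toFinset

@[simp] lemma mem_compF {l : List (GState D)} :
    l ∈ compF D ↔ IsCompleteTraj l := Set.Finite.mem_toFinset _

end PathSets

section TrajPF

variable {D : ℕ} (PF : GState D → GState D → ℝ)

@[simp] lemma trajPF_nil : trajPF PF [] = 1 := rfl

@[simp] lemma trajPF_singleton (s : GState D) : trajPF PF [s] = 1 := rfl

lemma trajPF_cons (s b : GState D) (t : List (GState D)) :
    trajPF PF (s :: b :: t) = PF s b * trajPF PF (b :: t) := rfl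

lemma trajPF_append : ∀ (π : List (GState D)) (hπ : π ≠ []) (b : GState D)
    (t : List (GState D)),
    trajPF PF (π ++ b :: t) = trajPF PF π * PF (π.getLast hπ) b * trajPF PF (b :: t)
  | [], hπ, _, _ => absurd rfl hπ
  | [x], _, b, t => by simp [trajPF_cons]
  | x :: y :: π', _, b, t => by
    have ih := trajPF_append (y :: π') (by simp) b t
    simp only [List.cons_append] at ih ⊢
    rw [trajPF_cons, trajPF_cons, ih]
    simp only [List.getLast_cons_cons]
    ring

lemma trajPF_pos (hFpos : ∀ s s' : GState D, IsChild s s' → 0 < PF s s')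
    {l : List (GState D)} (hc : l.Chain' IsChild) : 0 < trajPF PF l := by
  unfold trajPF
  apply List.prod_pos
  intro x hx
  simp only [List.mem_map] at hx
  obtain ⟨⟨a, b⟩, hab, rfl⟩ := hx
  exact hFpos a b (rel_of_mem_zip_tail hc hab)

lemma eq_cons_of_mem_pathsT {s : GState D} {l : List (GState D)} (h : l ∈ PathsT s) :
    l = s :: l.tail :=
  List.eq_cons_of_mem_head? (by rw [h.2.1]; rfl)

lemma pathsT_terminal {s : GState D} (hs : IsTerminal s) : PathsT s = {[s]} := by
  ext l
  simp only [Set.mem_singleton_iff]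
  constructor
  · intro h
    have hl := eq_cons_of_mem_pathsT h
    rcases ht : l.tail with _ | ⟨c, t⟩
    · rw [hl, ht]
    · rw [hl, ht] at h
      exact absurd (List.isChain_cons_cons.mp h.1).1 hs.not_isChild
  · rintro rfl
    exact ⟨List.isChain_singleton s, rfl, s, rfl, hs⟩

lemma pathsT_of_cons {s c : GState D} {t : List (GState D)}
    (h : (s :: c :: t) ∈ PathsT s) : IsChild s c ∧ (c :: t) ∈ PathsT c := by
  obtain ⟨hc, -, u, hu, hut⟩ := h
  rw [List.Chain', List.isChain_cons_cons] at hc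
  exact ⟨hc.1, hc.2, rfl, u, by rwa [List.getLast?_cons_cons] at hu, hut⟩

lemma cons_mem_pathsT {s c : GState D} {t : List (GState D)} (hsc : IsChild s c)
    (h : (c :: t) ∈ PathsT c) : (s :: c :: t) ∈ PathsT s := by
  obtain ⟨hc, -, u, hu, hut⟩ := h
  exact ⟨List.isChain_cons_cons.mpr ⟨hsc, hc⟩, rfl, u, by rwa [List.getLast?_cons_cons], hut⟩

end TrajPF

section Out

variable {D : ℕ}

noncomputable def out (PF : GState D → GState D → ℝ) (s : GState D) : ℝ :=
  ∑ l ∈ pathF s, trajPF PF l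

noncomputable def rpre (PF : GState D → GState D → ℝ) (s : GState D) : ℝ :=
  ∑ l ∈ preF s, trajPF PF l

lemma out_terminal (PF : GState D → GState D → ℝ) {s : GState D} (hs : IsTerminal s) :
    out PF s = 1 := by
  unfold out
  have : pathF s = {[s]} := by
    ext l
    simp [pathsT_terminal hs]
  rw [this, Finset.sum_singleton, trajPF_singleton]

lemma out_eq_one (PF : GState D → GState D → ℝ) (hPF : IsForwardPolicy PF) (s : GState D) :
    out PF s = 1 := by
  suffices h : ∀ (k : ℕ) (s : GState D), D - numAssigned s ≤ k → out PF s = 1 by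
    exact h D s (by omega)
  intro k
  induction k with
  | zero =>
    intro s hs
    have : numAssigned s = D := by have := numAssigned_le s; omega
    exact out_terminal PF (isTerminal_iff_numAssigned.mpr this)
  | succ k ih =>
    intro s hs
    by_cases hterm : IsTerminal s
    · exact out_terminal PF hterm
    -- decompose paths from s by first step
    have hsum : out PF s =
        ∑ p ∈ (Finset.univ.filter fun c => IsChild s c).sigma (fun c => pathF c),
          PF s p.1 * trajPF PF p.2 := by
      unfold out
      refine Finset.sum_bij'
        (t := (Finset.univ.filter fun c => IsChild s c).sigma fun c => pathF c)
        (g := fun p => PF s p.1 * trajPF PF p.2)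
        (fun l hl => (⟨(l.tail).headI, l.tail⟩ : Σ _ : GState D, List (GState D)))
        (fun p _ => s :: p.2) ?_ ?_ ?_ ?_ ?_
      · -- membership of decomposition
        intro l hl
        rw [mem_pathF] at hl
        have hcons := eq_cons_of_mem_pathsT hl
        rcases ht : l.tail with _ | ⟨c, t⟩
        · exfalso
          rw [hcons, ht] at hl
          obtain ⟨-, -, u, hu, hut⟩ := hl
          simp only [List.getLast?_singleton, Option.some.injEq] at hu
          exact hterm (hu ▸ hut)
        · rw [hcons, ht] at hl
          obtain ⟨h1, h2⟩ := pathsT_of_cons hl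
          simp only [Finset.mem_sigma, Finset.mem_filter, Finset.mem_univ, true_and, ht]
          exact ⟨h1, mem_pathF.mpr h2⟩
      · intro p hp
        obtain ⟨p1, p2⟩ := p
        simp only [Finset.mem_sigma, Finset.mem_filter, Finset.mem_univ, true_and,
          mem_pathF] at hp
        obtain ⟨h1, h2⟩ := hp
        have hc := eq_cons_of_mem_pathsT h2
        show s :: p2 ∈ pathF s
        rw [mem_pathF, hc]
        exact cons_mem_pathsT h1 (hc ▸ h2)
      · intro l hl
        rw [mem_pathF] at hl
        exact (eq_cons_of_mem_pathsT hl).symm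
      · intro p hp
        obtain ⟨p1, p2⟩ := p
        simp only [Finset.mem_sigma, Finset.mem_filter, Finset.mem_univ, true_and,
          mem_pathF] at hp
        obtain ⟨h1, h2⟩ := hp
        have hc := eq_cons_of_mem_pathsT h2
        show (⟨(s :: p2).tail.headI, (s :: p2).tail⟩ : Σ _ : GState D, List (GState D))
          = ⟨p1, p2⟩
        simp only [List.tail_cons]
        conv_lhs => rw [hc]
        simp only [List.headI]
        exact congrArg (Sigma.mk p1) hc.symm
      · intro l hl
        rw [mem_pathF] at hl
        have hcons := eq_cons_of_mem_pathsT hl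
        rcases ht : l.tail with _ | ⟨c, t⟩
        · exfalso
          rw [hcons, ht] at hl
          obtain ⟨-, -, u, hu, hut⟩ := hl
          simp only [List.getLast?_singleton, Option.some.injEq] at hu
          exact hterm (hu ▸ hut)
        · show trajPF PF l = PF s (c :: t).headI * trajPF PF (c :: t)
          conv_lhs => rw [hcons, ht]
          rw [trajPF_cons]
          simp
    rw [hsum]
    rw [← Finset.sum_sigma' (Finset.univ.filter fun c => IsChild s c) (fun c => pathF c)
      (fun c l => PF s c * trajPF PF l)]
    have hout : ∀ c ∈ Finset.univ.filter fun c => IsChild s c,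
        (∑ l ∈ pathF c, PF s c * trajPF PF l) = PF s c := by
      intro c hc
      rw [Finset.mem_filter] at hc
      rw [← Finset.mul_sum]
      have : out PF c = 1 := by
        apply ih
        have := hc.2.numAssigned_eq
        have h2 := numAssigned_le c
        omega
      rw [show (∑ l ∈ pathF c, trajPF PF l) = out PF c from rfl, this, mul_one]
    rw [Finset.sum_congr rfl hout]
    rw [Finset.sum_filter_of_ne (fun c _ hne => (hPF s hterm).2.1 c hne)]
    exact (hPF s hterm).2.2

section Flows

variable {D : ℕ}

noncomputable def rch (PF : GState D → GState D → ℝ) (s : GState D) : ℝ :=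
  ∑ l ∈ (compF D).filter (fun l => s ∈ l), trajPF PF l

noncomputable def ech (PF : GState D → GState D → ℝ) (a b : GState D) : ℝ :=
  ∑ l ∈ (compF D).filter (fun l => (a, b) ∈ l.zip l.tail), trajPF PF l

lemma finsum_mem_comp (P : List (GState D) → Prop) (f : List (GState D) → ℝ) :
    ∑ᶠ l ∈ {l : List (GState D) | IsCompleteTraj l ∧ P l}, f l
      = ∑ l ∈ (compF D).filter (fun l => P l), f l := by
  have hfin : {l : List (GState D) | IsCompleteTraj l ∧ P l}.Finite :=
    finite_of_chain' fun l hl => hl.1.2.1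
  rw [finsum_mem_eq_finite_toFinset_sum _ hfin]
  apply Finset.sum_congr _ (fun _ _ => rfl)
  ext l
  simp [Set.Finite.mem_toFinset, Finset.mem_filter]

lemma finsum_comp' (f : List (GState D) → ℝ) :
    ∑ᶠ l ∈ {l : List (GState D) | IsCompleteTraj l}, f l = ∑ l ∈ compF D, f l := by
  have hfin : {l : List (GState D) | IsCompleteTraj l}.Finite :=
    finite_of_chain' fun l hl => hl.2.1
  rw [finsum_mem_eq_finite_toFinset_sum _ hfin]
  apply Finset.sum_congr _ (fun _ _ => rfl)
  ext l
  simp [Set.Finite.mem_toFinset]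

lemma stateFlow_eq (PF : GState D → GState D → ℝ) (Z : ℝ) (s : GState D) :
    stateFlow PF Z s = Z * rch PF s := by
  rw [stateFlow, finsum_mem_comp (fun l => s ∈ l), rch, Finset.mul_sum]
  exact Finset.sum_congr (by ext l; simp) fun _ _ => rfl

lemma edgeFlow_eq (PF : GState D → GState D → ℝ) (Z : ℝ) (a b : GState D) :
    edgeFlow PF Z a b = Z * ech PF a b := by
  rw [edgeFlow, finsum_mem_comp (fun l => (a, b) ∈ l.zip l.tail), ech, Finset.mul_sum]
  exact Finset.sum_congr (by ext l; simp) fun _ _ => rfl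

lemma ech_eq_zero_of_not_isChild (PF : GState D → GState D → ℝ) {a b : GState D}
    (h : ¬ IsChild a b) : ech PF a b = 0 := by
  unfold ech
  have hemp : (compF D).filter (fun l => (a, b) ∈ l.zip l.tail) = ∅ :=
    Finset.filter_false_of_mem fun l hl hzip =>
      h (rel_of_mem_zip_tail (mem_compF.mp hl).2.1 hzip)
  rw [hemp, Finset.sum_empty]

lemma IsPath.ne_nil {l : List (GState D)} {s t : GState D} (h : IsPath l s t) : l ≠ [] := by
  rintro rfl
  simp [IsPath] at h

lemma IsPath.getLast_eq {l : List (GState D)} {s t : GState D} (h : IsPath l s t) :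
    l.getLast h.ne_nil = t := by
  have := List.getLast?_eq_getLast h.ne_nil
  rw [h.2.2] at this
  exact (Option.some_injective _ this).symm

/-- The key splitting identity for the edge flow. -/
lemma ech_split (PF : GState D → GState D → ℝ) {a b : GState D} (hab : IsChild a b) :
    ech PF a b = rpre PF a * PF a b * out PF b := by
  have hrw : rpre PF a * PF a b * out PF b
      = ∑ q ∈ (preF a) ×ˢ (pathF b), trajPF PF q.1 * PF a b * trajPF PF q.2 := by
    rw [rpre, out, Finset.sum_mul, Finset.sum_mul_sum, ← Finset.sum_product']
  rw [hrw, ech]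
  refine (Finset.sum_bij'
    (fun q _ => q.1 ++ q.2)
    (fun l _ => (l.take (l.idxOf a + 1), l.drop (l.idxOf a + 1)))
    ?_ ?_ ?_ ?_ ?_).symm
  · -- gluing is a complete trajectory containing the edge
    rintro ⟨π, ρ⟩ hq
    simp only [Finset.mem_product, mem_preF, mem_pathF] at hq
    obtain ⟨hπ, hρ⟩ := hq
    have hπne : π ≠ [] := hπ.ne_nil
    obtain ⟨t, rfl⟩ : ∃ t, ρ = b :: t := ⟨ρ.tail, eq_cons_of_mem_pathsT hρ⟩
    have hρne : (b :: t) ≠ [] := by simp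
    have hlastπ : π.getLast hπne = a := hπ.getLast_eq
    have hchain : (π ++ b :: t).Chain' IsChild := by
      rw [List.Chain', List.isChain_append]
      refine ⟨hπ.1, hρ.1, ?_⟩
      intro x hx y hy
      rw [hπ.2.2] at hx
      obtain rfl : a = x := by simpa using hx
      obtain rfl : b = y := by simpa using hy
      exact hab
    have h1 : 1 ≤ π.length := by
      cases π with
      | nil => exact absurd rfl hπne
      | cons _ _ => simp
    have hmemzip : (a, b) ∈ (π ++ b :: t).zip (π ++ b :: t).tail := by
      rw [mem_zip_tail_iff]
      refine ⟨π.length - 1, by simp only [List.length_append, List.length_cons]; omega, ?_, ?_⟩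
      · rw [List.getElem_append_left (by omega)]
        rw [← List.getLast_eq_getElem hπne, hlastπ]
      · simp only [Nat.sub_add_cancel h1]
        rw [List.getElem_append_right (le_refl _)]
        simp
    refine Finset.mem_filter.mpr ⟨mem_compF.mpr ?_, hmemzip⟩
    refine ⟨?_, hchain, ?_⟩
    · have := List.mem_head?_append_of_mem_head? (t := b :: t) (by rw [hπ.2.1]; rfl)
      simpa using this
    · obtain ⟨-, -, u, hu, hut⟩ := hρ
      exact ⟨u, by rw [List.getLast?_append_of_ne_nil _ hρne, hu], hut⟩
  · -- splitting a trajectory containing the edge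
    intro l hl
    simp only [Finset.mem_filter, mem_compF] at hl
    obtain ⟨hcomp, hzip⟩ := hl
    obtain ⟨i, hi, hia, hib⟩ := mem_zip_tail_iff.mp hzip
    have hnd := hcomp.2.1.isChild_nodup
    have hmem : a ∈ l := by rw [List.mem_iff_getElem]; exact ⟨i, by omega, hia⟩
    have hk : l.idxOf a < l.length := List.idxOf_lt_length_iff.mpr hmem
    have hki : l.idxOf a = i :=
      (List.Nodup.getElem_inj_iff hnd (hi := hk) (hj := by omega)).mp
        ((List.getElem_idxOf hk).trans hia.symm)
    simp only [Finset.mem_product, mem_preF, mem_pathF, hki]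
    have hsplit := List.take_append_drop (i + 1) l
    have hchains := List.isChain_append.mp (hsplit ▸ hcomp.2.1)
    have htakene : l.take (i + 1) ≠ [] := by
      intro h; have h0 := congrArg List.length h
      rw [List.length_take] at h0; simp only [List.length_nil] at h0; omega
    have hdropne : l.drop (i + 1) ≠ [] := by
      intro h; have h0 := congrArg List.length h
      rw [List.length_drop] at h0; simp only [List.length_nil] at h0; omega
    constructor
    · refine ⟨hchains.1, ?_, ?_⟩
      · have hlc := eq_cons_of_mem_pathsT (isCompleteTraj_iff_mem_pathsT.mp hcomp)
        conv_lhs => rw [hlc, List.take_succ_cons]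
        rfl
      · rw [List.getLast?_eq_getLast htakene, List.getLast_eq_getElem]
        have hlen : (l.take (i + 1)).length = i + 1 := by
          rw [List.length_take]; omega
        simp only [hlen, Nat.add_sub_cancel]
        rw [List.getElem_take]
        exact congrArg some hia
    · refine ⟨hchains.2.1, ?_, ?_⟩
      · rw [List.head?_drop, List.getElem?_eq_getElem hi]
        exact congrArg some hib
      · obtain ⟨u, hu, hut⟩ := hcomp.2.2
        refine ⟨u, ?_, hut⟩
        rw [← hu]
        conv_rhs => rw [← hsplit]
        rw [List.getLast?_append_of_ne_nil _ hdropne]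
  · -- left inverse
    rintro ⟨π, ρ⟩ hq
    simp only [Finset.mem_product, mem_preF, mem_pathF] at hq
    obtain ⟨hπ, hρ⟩ := hq
    have hπne : π ≠ [] := hπ.ne_nil
    have h1 : 1 ≤ π.length := by
      cases π with
      | nil => exact absurd rfl hπne
      | cons _ _ => simp
    have hnd : (π ++ ρ).Nodup := by
      have hρcons := eq_cons_of_mem_pathsT hρ
      have hchain : (π ++ ρ).Chain' IsChild := by
        rw [List.Chain', List.isChain_append]
        refine ⟨hπ.1, hρ.1, ?_⟩
        intro x hx y hy
        rw [hπ.2.2] at hx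
        rw [hρ.2.1] at hy
        obtain rfl : a = x := by simpa using hx
        obtain rfl : b = y := by simpa using hy
        exact hab
      exact hchain.isChild_nodup
    have hmem : a ∈ π ++ ρ := by
      apply List.mem_append_left
      rw [← hπ.getLast_eq]
      exact List.getLast_mem hπne
    have hk : (π ++ ρ).idxOf a < (π ++ ρ).length := List.idxOf_lt_length_iff.mpr hmem
    have hka : (π ++ ρ)[(π ++ ρ).idxOf a] = a := List.getElem_idxOf hk
    have hgl : (π ++ ρ)[π.length - 1]'(by simp only [List.length_append]; omega) = a := by
      rw [List.getElem_append_left (by omega)]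
      rw [← List.getLast_eq_getElem hπne, hπ.getLast_eq]
    have hki : (π ++ ρ).idxOf a = π.length - 1 :=
      (List.Nodup.getElem_inj_iff hnd (hi := hk)
        (hj := by simp only [List.length_append]; omega)).mp (hka.trans hgl.symm)
    have hk1 : (π ++ ρ).idxOf a + 1 = π.length := by omega
    show (List.take ((π ++ ρ).idxOf a + 1) (π ++ ρ),
      List.drop ((π ++ ρ).idxOf a + 1) (π ++ ρ)) = (π, ρ)
    rw [hk1, List.take_left, List.drop_left]
  · -- right inverse
    intro l _
    exact List.take_append_drop _ l
  · -- values agree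
    rintro ⟨π, ρ⟩ hq
    simp only [Finset.mem_product, mem_preF, mem_pathF] at hq
    obtain ⟨hπ, hρ⟩ := hq
    have hπne : π ≠ [] := hπ.ne_nil
    obtain ⟨t, rfl⟩ : ∃ t, ρ = b :: t := ⟨ρ.tail, eq_cons_of_mem_pathsT hρ⟩
    show trajPF PF π * PF a b * trajPF PF (b :: t) = trajPF PF (π ++ b :: t)
    rw [trajPF_append PF π hπne, hπ.getLast_eq]

end Flows

section Struct

variable {D : ℕ}

lemma IsCompleteTraj.nodup {l : List (GState D)} (h : IsCompleteTraj l) : l.Nodup :=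
  h.2.1.isChild_nodup

lemma IsCompleteTraj.eq_cons {l : List (GState D)} (h : IsCompleteTraj l) :
    l = initState D :: l.tail :=
  eq_cons_of_mem_pathsT (isCompleteTraj_iff_mem_pathsT.mp h)

lemma IsCompleteTraj.ne_nil {l : List (GState D)} (h : IsCompleteTraj l) : l ≠ [] := by
  rw [h.eq_cons]; simp

lemma IsCompleteTraj.init_mem {l : List (GState D)} (h : IsCompleteTraj l) :
    initState D ∈ l := by
  rw [h.eq_cons]; simp

lemma mem_dropLast_or_eq_getLast {α : Type*} {l : List α} (hne : l ≠ []) {x : α}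
    (h : x ∈ l) : x ∈ l.dropLast ∨ x = l.getLast hne := by
  conv at h => rw [← List.dropLast_append_getLast hne]
  rcases List.mem_append.mp h with h' | h'
  · exact Or.inl h'
  · exact Or.inr (by simpa using h')

lemma not_terminal_of_mem_dropLast {l : List (GState D)} (hc : l.Chain' IsChild)
    {x : GState D} (h : x ∈ l.dropLast) : ¬ IsTerminal x := by
  obtain ⟨y, hy⟩ := exists_mem_zip_tail_of_mem_dropLast h
  exact (rel_of_mem_zip_tail hc hy).not_isTerminal

lemma IsCompleteTraj.mem_dropLast {l : List (GState D)} (h : IsCompleteTraj l)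
    {x : GState D} (hx : x ∈ l) (hxt : ¬ IsTerminal x) : x ∈ l.dropLast := by
  rcases mem_dropLast_or_eq_getLast h.ne_nil hx with h' | h'
  · exact h'
  · exfalso
    obtain ⟨u, hu, hut⟩ := h.2.2
    rw [List.getLast?_eq_getLast h.ne_nil] at hu
    exact hxt (h' ▸ (Option.some_injective _ hu) ▸ hut)

lemma IsCompleteTraj.terminal_getLast {l : List (GState D)} (h : IsCompleteTraj l)
    {x : GState D} (hx : x ∈ l) (hxt : IsTerminal x) : l.getLast? = some x := by
  rcases mem_dropLast_or_eq_getLast h.ne_nil hx with h' | h'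
  · exact absurd hxt (not_terminal_of_mem_dropLast h.2.1 h')
  · rw [List.getLast?_eq_getLast h.ne_nil, h']

lemma IsCompleteTraj.mem_tail {l : List (GState D)} (h : IsCompleteTraj l)
    {x : GState D} (hx : x ∈ l) (hxi : x ≠ initState D) : x ∈ l.tail := by
  conv at hx => rw [h.eq_cons]
  rcases List.mem_cons.mp hx with h' | h'
  · exact absurd h' hxi
  · exact h'

lemma IsCompleteTraj.init_not_mem_tail {l : List (GState D)} (h : IsCompleteTraj l) :
    initState D ∉ l.tail := by
  intro hmem
  obtain ⟨a, ha⟩ := exists_mem_zip_tail_of_mem_tail hmem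
  exact not_isChild_initState (rel_of_mem_zip_tail h.2.1 ha)

end Struct

section Counting

variable {D : ℕ} (PF : GState D → GState D → ℝ)

lemma sum_ech_succ {a : GState D} (ha : ¬ IsTerminal a) :
    ∑ b : GState D, ech PF a b = rch PF a := by
  unfold ech rch
  simp_rw [Finset.sum_filter]
  rw [Finset.sum_comm]
  refine Finset.sum_congr rfl fun l hl => ?_
  have hc := mem_compF.mp hl
  by_cases hmem : a ∈ l
  · obtain ⟨b₀, hb₀⟩ := exists_mem_zip_tail_of_mem_dropLast (hc.mem_dropLast hmem ha)
    rw [if_pos hmem]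
    rw [Finset.sum_eq_single_of_mem b₀ (Finset.mem_univ _)]
    · rw [if_pos hb₀]
    · intro b _ hbne
      rw [if_neg]
      intro hb
      exact hbne (snd_unique_of_mem_zip_tail hc.nodup hb hb₀)
  · rw [if_neg hmem]
    apply Finset.sum_eq_zero
    intro b _
    rw [if_neg]
    intro hb
    exact hmem ((List.dropLast_sublist l).subset (mem_dropLast_of_mem_zip_tail hb))

lemma sum_ech_pred {b : GState D} (hb : b ≠ initState D) :
    ∑ a : GState D, ech PF a b = rch PF b := by
  unfold ech rch
  simp_rw [Finset.sum_filter]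
  rw [Finset.sum_comm]
  refine Finset.sum_congr rfl fun l hl => ?_
  have hc := mem_compF.mp hl
  by_cases hmem : b ∈ l
  · obtain ⟨a₀, ha₀⟩ := exists_mem_zip_tail_of_mem_tail (hc.mem_tail hmem hb)
    rw [if_pos hmem]
    rw [Finset.sum_eq_single_of_mem a₀ (Finset.mem_univ _)]
    · rw [if_pos ha₀]
    · intro a _ hane
      rw [if_neg]
      intro hazip
      exact hane (fst_unique_of_mem_zip_tail hc.nodup hazip ha₀)
  · rw [if_neg hmem]
    apply Finset.sum_eq_zero
    intro a _
    rw [if_neg]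
    intro hazip
    exact hmem (List.mem_of_mem_tail (mem_tail_of_mem_zip_tail hazip))

lemma sum_rch_ofX :
    ∑ x : Fin D → Bool, rch PF (ofX x) = ∑ l ∈ compF D, trajPF PF l := by
  unfold rch
  simp_rw [Finset.sum_filter]
  rw [Finset.sum_comm]
  refine Finset.sum_congr rfl fun l hl => ?_
  have hc := mem_compF.mp hl
  obtain ⟨u, hu, hut⟩ := hc.2.2
  obtain ⟨x₀, rfl⟩ := isTerminal_iff_ofX.mp hut
  have hx₀mem : ofX x₀ ∈ l := by
    rw [List.getLast?_eq_getLast hc.ne_nil] at hu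
    rw [← Option.some_injective _ hu]
    exact List.getLast_mem hc.ne_nil
  rw [Finset.sum_eq_single_of_mem x₀ (Finset.mem_univ _)]
  · rw [if_pos hx₀mem]
  · intro x _ hxne
    rw [if_neg]
    intro hx
    have := hc.terminal_getLast hx (isTerminal_iff_ofX.mpr ⟨x, rfl⟩)
    rw [hu] at this
    exact hxne (ofX_injective (Option.some_injective _ this.symm))

lemma rch_init : rch PF (initState D) = ∑ l ∈ compF D, trajPF PF l := by
  unfold rch
  rw [Finset.filter_true_of_mem fun l hl => (mem_compF.mp hl).init_mem]

lemma compF_eq_pathF_init : compF D = pathF (initState D) := by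
  ext l
  rw [mem_compF, mem_pathF, isCompleteTraj_iff_mem_pathsT]

lemma rch_init_eq_one (hPF : IsForwardPolicy PF) : rch PF (initState D) = 1 := by
  rw [rch_init, compF_eq_pathF_init]
  exact out_eq_one PF hPF (initState D)

lemma sum_compF_eq_one (hPF : IsForwardPolicy PF) :
    ∑ l ∈ compF D, trajPF PF l = 1 := by
  rw [← rch_init]; exact rch_init_eq_one PF hPF

lemma rch_eq_rpre (hPF : IsForwardPolicy PF) {a : GState D} (ha : ¬ IsTerminal a) :
    rch PF a = rpre PF a := by
  rw [← sum_ech_succ PF ha]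
  have hcong : ∀ b, ech PF a b = rpre PF a * PF a b := by
    intro b
    by_cases hc : IsChild a b
    · rw [ech_split PF hc, out_eq_one PF hPF, mul_one]
    · rw [ech_eq_zero_of_not_isChild PF hc]
      have hz : PF a b = 0 := by
        by_contra h
        exact hc ((hPF a ha).2.1 b h)
      rw [hz, mul_zero]
  rw [Finset.sum_congr rfl fun b _ => hcong b, ← Finset.mul_sum, (hPF a ha).2.2, mul_one]

lemma ech_eq_rch_mul (hPF : IsForwardPolicy PF) {a : GState D} (ha : ¬ IsTerminal a)
    (b : GState D) : ech PF a b = rch PF a * PF a b := by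
  rw [rch_eq_rpre PF hPF ha]
  by_cases hc : IsChild a b
  · rw [ech_split PF hc, out_eq_one PF hPF, mul_one]
  · rw [ech_eq_zero_of_not_isChild PF hc]
    have hz : PF a b = 0 := by
      by_contra h
      exact hc ((hPF a ha).2.1 b h)
    rw [hz, mul_zero]

end Counting

section Existence

variable {D : ℕ}

lemma exists_pre (s : GState D) : ∃ l, IsPath l (initState D) s := by
  suffices h : ∀ (n : ℕ) (s : GState D), numAssigned s = n → ∃ l, IsPath l (initState D) s by
    exact h (numAssigned s) s rfl
  intro n
  induction n with
  | zero =>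
    intro s hs
    obtain rfl := numAssigned_eq_zero_iff.mp hs
    exact ⟨[initState D], List.isChain_singleton _, rfl, rfl⟩
  | succ n ih =>
    intro s hs
    have : ∃ i, s i ≠ none := by
      by_contra h
      push_neg at h
      have : numAssigned s = 0 := numAssigned_eq_zero_iff.mpr (funext fun i => by
        simp [h i, initState])
      omega
    obtain ⟨i, hi⟩ := this
    obtain ⟨b, hb⟩ : ∃ b, s i = some b := Option.ne_none_iff_exists'.mp hi
    set s' := Function.update s i none with hs'
    have hchild : IsChild s' s := by
      refine ⟨i, b, by simp [hs'], funext fun j => ?_⟩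
      by_cases hj : j = i
      · subst hj; simp [hs', hb]
      · simp [hs', Function.update_of_ne hj]
    have hnum : numAssigned s' = n := by
      have := hchild.numAssigned_eq
      omega
    obtain ⟨π, hπ⟩ := ih s' hnum
    refine ⟨π ++ [s], ?_, ?_, ?_⟩
    · rw [List.Chain', List.isChain_append]
      refine ⟨hπ.1, List.isChain_singleton _, ?_⟩
      intro x hx y hy
      rw [hπ.2.2] at hx
      obtain rfl : s' = x := by simpa using hx
      obtain rfl : s = y := by simpa using hy
      exact hchild
    · have := List.mem_head?_append_of_mem_head? (t := [s]) (by rw [hπ.2.1]; rfl)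
      simpa using this
    · rw [List.getLast?_append_of_ne_nil _ (by simp)]
      rfl
  
lemma exists_pathsT (s : GState D) : ∃ l, l ∈ PathsT s := by
  suffices h : ∀ (k : ℕ) (s : GState D), D - numAssigned s ≤ k → ∃ l, l ∈ PathsT s by
    exact h D s (by omega)
  intro k
  induction k with
  | zero =>
    intro s hs
    have hterm : IsTerminal s := isTerminal_iff_numAssigned.mpr
      (by have := numAssigned_le s; omega)
    exact ⟨[s], List.isChain_singleton _, rfl, s, rfl, hterm⟩
  | succ k ih =>
    intro s hs
    by_cases hterm : IsTerminal s
    · exact ⟨[s], List.isChain_singleton _, rfl, s, rfl, hterm⟩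
    · have : ∃ i, s i = none := by
        by_contra h
        push_neg at h
        exact hterm fun i => h i
      obtain ⟨i, hi⟩ := this
      set c := Function.update s i (some false) with hc
      have hchild : IsChild s c := ⟨i, false, hi, rfl⟩
      have hnum : numAssigned c = numAssigned s + 1 := hchild.numAssigned_eq
      have hsnum : numAssigned s < D := by
        rcases Nat.lt_or_ge (numAssigned s) D with h | h
        · exact h
        · exact absurd (isTerminal_iff_numAssigned.mpr
            (le_antisymm (numAssigned_le s) h)) hterm
      obtain ⟨ρ, hρ⟩ := ih c (by omega)
      obtain ⟨t, rfl⟩ : ∃ t, ρ = c :: t := ⟨ρ.tail, eq_cons_of_mem_pathsT hρ⟩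
      exact ⟨s :: c :: t, cons_mem_pathsT hchild hρ⟩

lemma exists_complete_mem (s : GState D) : ∃ l, IsCompleteTraj l ∧ s ∈ l := by
  obtain ⟨π, hπ⟩ := exists_pre s
  obtain ⟨ρ, hρ⟩ := exists_pathsT s
  have hρcons := eq_cons_of_mem_pathsT hρ
  have hπne := hπ.ne_nil
  have hsmem : s ∈ π := by
    rw [← hπ.getLast_eq]
    exact List.getLast_mem hπne
  rcases hρt : ρ.tail with _ | ⟨c, t⟩
  · -- ρ = [s], s terminal
    have hρs : ρ = [s] := by rw [hρcons, hρt]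
    obtain ⟨-, -, u, hu, hut⟩ := hρ
    rw [hρs] at hu
    obtain rfl : s = u := by simpa using hu
    exact ⟨π, ⟨hπ.2.1, hπ.1, s, hπ.2.2, hut⟩, hsmem⟩
  · have hρ2 : ρ = s :: c :: t := by rw [hρcons, hρt]
    have hchild : IsChild s c := by
      have := hρ.1
      rw [hρ2] at this
      exact (List.isChain_cons_cons.mp this).1
    have hchainct : (c :: t).Chain' IsChild := by
      have := hρ.1
      rw [hρ2] at this
      exact (List.isChain_cons_cons.mp this).2
    refine ⟨π ++ c :: t, ⟨?_, ?_, ?_⟩, List.mem_append_left _ hsmem⟩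
    · have := List.mem_head?_append_of_mem_head? (t := c :: t) (by rw [hπ.2.1]; rfl)
      simpa using this
    · rw [List.Chain', List.isChain_append]
      refine ⟨hπ.1, hchainct, ?_⟩
      intro x hx y hy
      rw [hπ.2.2] at hx
      obtain rfl : s = x := by simpa using hx
      obtain rfl : c = y := by simpa using hy
      exact hchild
    · obtain ⟨-, -, u, hu, hut⟩ := hρ
      refine ⟨u, ?_, hut⟩
      rw [List.getLast?_append_of_ne_nil _ (by simp)]
      rw [hρ2, List.getLast?_cons_cons] at hu
      exact hu

end Existence

section Positivity

variable {D : ℕ} (PF : GState D → GState D → ℝ)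

lemma rch_pos (hFpos : ∀ s s' : GState D, IsChild s s' → 0 < PF s s') (s : GState D) :
    0 < rch PF s := by
  obtain ⟨l, hl, hmem⟩ := exists_complete_mem s
  refine Finset.sum_pos (fun l' hl' => ?_) ⟨l, Finset.mem_filter.mpr ⟨mem_compF.mpr hl, hmem⟩⟩
  exact trajPF_pos PF hFpos (mem_compF.mp (Finset.mem_filter.mp hl').1).2.1

lemma ech_nonneg (hFpos : ∀ s s' : GState D, IsChild s s' → 0 < PF s s') (a b : GState D) :
    0 ≤ ech PF a b :=
  Finset.sum_nonneg fun l hl =>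
    (trajPF_pos PF hFpos (mem_compF.mp (Finset.mem_filter.mp hl).1).2.1).le

end Positivity

section Swap

variable {D : ℕ} (PF : GState D → GState D → ℝ)

lemma sum_traj_listsum (g : List (GState D) → List (GState D))
    (hg : ∀ l, (g l).Sublist l) (h : GState D → ℝ) :
    ∑ l ∈ compF D, trajPF PF l * ((g l).map h).sum
      = ∑ s : GState D,
          (∑ l ∈ (compF D).filter (fun l => s ∈ g l), trajPF PF l) * h s := by
  have step : ∀ l ∈ compF D, trajPF PF l * ((g l).map h).sum
      = ∑ s : GState D, (if s ∈ g l then trajPF PF l * h s else 0) := by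
    intro l hl
    have hnd : (g l).Nodup := (mem_compF.mp hl).nodup.sublist (hg l)
    rw [← List.sum_toFinset _ hnd, Finset.mul_sum]
    have htf : (g l).toFinset = Finset.univ.filter (fun s => s ∈ g l) := by
      ext s; simp
    rw [htf, Finset.sum_filter]
  rw [Finset.sum_congr rfl step, Finset.sum_comm]
  refine Finset.sum_congr rfl fun s _ => ?_
  rw [Finset.sum_mul, Finset.sum_filter]

end Swap

section RchCongr

variable {D : ℕ} (PF : GState D → GState D → ℝ)

lemma rch_congr (s : GState D) (P : List (GState D) → Prop) [DecidablePred P]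
    (h : ∀ l, IsCompleteTraj l → (P l ↔ s ∈ l)) :
    ∑ l ∈ (compF D).filter P, trajPF PF l = rch PF s := by
  unfold rch
  refine Finset.sum_congr ?_ fun _ _ => rfl
  ext l
  simp only [Finset.mem_filter, mem_compF]
  exact and_congr_right fun hc => h l hc

end RchCongr

/-- Let `P_F` be a forward policy positive on every edge of `G` and `Z > 0`.
Then the state flow `F(s)` is positive for every state `s` (every state lies on a complete
trajectory), the induced backward policy `P_B^F(s|s') = F(s→s')/F(s')` is a backward policy,
and
`H[P_F] = Σ_τ P_F(τ)·Σ_{i=1}^{D} H[P_B^F(·|t_i)] + log Z − (1/Z)·Σ_{x∈X} F(x)·log F(x)`. -/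
theorem statement6 {D : ℕ} (hD : 1 ≤ D)
    (PF : GState D → GState D → ℝ) (hPF : IsForwardPolicy PF)
    (hFpos : ∀ s s' : GState D, IsChild s s' → 0 < PF s s')
    (Z : ℝ) (hZ : 0 < Z) :
    (∀ s : GState D, 0 < stateFlow PF Z s) ∧
    IsBackwardPolicy (fun s' s => edgeFlow PF Z s s' / stateFlow PF Z s') ∧
    flowEntropy PF =
      (∑ᶠ l ∈ {l : List (GState D) | IsCompleteTraj l},
        trajPF PF l *
          (l.tail.map fun t =>
            ∑ s : GState D,
              Real.negMulLog (edgeFlow PF Z s t / stateFlow PF Z t)).sum)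
      + Real.log Z
      - (1 / Z) * ∑ x : Fin D → Bool,
          stateFlow PF Z (ofX x) * Real.log (stateFlow PF Z (ofX x)) := by
  have hZne : Z ≠ 0 := ne_of_gt hZ
  have hpos : ∀ s : GState D, 0 < stateFlow PF Z s := by
    intro s
    rw [stateFlow_eq]
    exact mul_pos hZ (rch_pos PF hFpos s)
  refine ⟨hpos, ?_, ?_⟩
  · -- the induced backward policy is a backward policy
    intro s' hs'
    refine ⟨?_, ?_, ?_⟩
    · intro s
      apply div_nonneg _ (hpos s').le
      rw [edgeFlow_eq]
      exact mul_nonneg hZ.le (ech_nonneg PF hFpos s s')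
    · intro s hratio
      by_contra hc
      apply hratio
      show edgeFlow PF Z s s' / stateFlow PF Z s' = 0
      rw [edgeFlow_eq, ech_eq_zero_of_not_isChild PF hc, mul_zero, zero_div]
    · show (∑ s : GState D, edgeFlow PF Z s s' / stateFlow PF Z s') = 1
      rw [← Finset.sum_div,
        Finset.sum_congr rfl (fun s _ => edgeFlow_eq PF Z s s'), ← Finset.mul_sum,
        sum_ech_pred PF hs', ← stateFlow_eq]
      exact div_self (ne_of_gt (hpos s'))
  · -- entropy identity
    have hA : flowEntropy PF
        = ∑ a : GState D, ∑ b : GState D, ech PF a b * (- Real.log (PF a b)) := by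
      rw [flowEntropy, finsum_comp', sum_traj_listsum PF (fun l => l.dropLast)
        (fun l => List.dropLast_sublist l) (stepEntropyF PF)]
      refine Finset.sum_congr rfl fun s _ => ?_
      by_cases hterm : IsTerminal s
      · have h0 : (compF D).filter (fun l => s ∈ l.dropLast) = ∅ :=
          Finset.filter_false_of_mem fun l hl hmem =>
            (not_terminal_of_mem_dropLast (mem_compF.mp hl).2.1 hmem) hterm
        rw [h0]
        simp only [Finset.sum_empty, zero_mul]
        symm
        exact Finset.sum_eq_zero fun b _ => by
          rw [ech_eq_zero_of_not_isChild PF hterm.not_isChild, zero_mul]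
      · have hfe : (∑ l ∈ (compF D).filter (fun l => s ∈ l.dropLast), trajPF PF l)
            = rch PF s :=
          rch_congr PF s _ fun l hc =>
            ⟨fun h => (List.dropLast_sublist l).subset h, fun h => hc.mem_dropLast h hterm⟩
        rw [hfe]
        simp only [stepEntropyF, Real.negMulLog_def]
        rw [Finset.mul_sum]
        refine Finset.sum_congr rfl fun b _ => ?_
        rw [ech_eq_rch_mul PF hPF hterm b]
        ring
    have hB : (∑ᶠ l ∈ {l : List (GState D) | IsCompleteTraj l},
          trajPF PF l *
            (l.tail.map fun t =>
              ∑ s : GState D,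
                Real.negMulLog (edgeFlow PF Z s t / stateFlow PF Z t)).sum)
        = ∑ a : GState D, ∑ b : GState D,
            ech PF a b * (- Real.log (ech PF a b / rch PF b)) := by
      conv_rhs => rw [Finset.sum_comm]
      rw [finsum_comp', sum_traj_listsum PF (fun l => l.tail)
        (fun l => List.tail_sublist l) _]
      refine Finset.sum_congr rfl fun t _ => ?_
      by_cases ht : t = initState D
      · subst ht
        have h0 : (compF D).filter (fun l => initState D ∈ l.tail) = ∅ :=
          Finset.filter_false_of_mem fun l hl hmem =>
            (mem_compF.mp hl).init_not_mem_tail hmem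
        rw [h0]
        simp only [Finset.sum_empty, zero_mul]
        symm
        exact Finset.sum_eq_zero fun a _ => by
          rw [ech_eq_zero_of_not_isChild PF not_isChild_initState, zero_mul]
      · have hfe : (∑ l ∈ (compF D).filter (fun l => t ∈ l.tail), trajPF PF l)
            = rch PF t :=
          rch_congr PF t _ fun l hc =>
            ⟨fun h => List.mem_of_mem_tail h, fun h => hc.mem_tail h ht⟩
        rw [hfe, Finset.mul_sum]
        refine Finset.sum_congr rfl fun a _ => ?_
        have hratio : edgeFlow PF Z a t / stateFlow PF Z t = ech PF a t / rch PF t := by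
          rw [edgeFlow_eq, stateFlow_eq, mul_div_mul_left _ _ hZne]
        rw [hratio]
        simp only [Real.negMulLog_def]
        have hrpos : 0 < rch PF t := rch_pos PF hFpos t
        have hcancel : rch PF t * (ech PF a t / rch PF t) = ech PF a t := by
          rw [mul_comm, div_mul_cancel₀ _ (ne_of_gt hrpos)]
        calc rch PF t * (-(ech PF a t / rch PF t) * Real.log (ech PF a t / rch PF t))
            = (rch PF t * (ech PF a t / rch PF t))
              * (- Real.log (ech PF a t / rch PF t)) := by ring
          _ = ech PF a t * (- Real.log (ech PF a t / rch PF t)) := by rw [hcancel]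
    have hC : ∀ a b : GState D,
        ech PF a b * (- Real.log (PF a b))
          - ech PF a b * (- Real.log (ech PF a b / rch PF b))
        = ech PF a b * Real.log (rch PF a) - ech PF a b * Real.log (rch PF b) := by
      intro a b
      by_cases h0 : ech PF a b = 0
      · rw [h0]; ring
      · have hchild : IsChild a b := by
          by_contra hc; exact h0 (ech_eq_zero_of_not_isChild PF hc)
        have ha : ¬ IsTerminal a := hchild.not_isTerminal
        have hpf : 0 < PF a b := hFpos a b hchild
        have hra : 0 < rch PF a := rch_pos PF hFpos a
        have hrb : 0 < rch PF b := rch_pos PF hFpos b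
        have hech : ech PF a b = rch PF a * PF a b := ech_eq_rch_mul PF hPF ha b
        rw [Real.log_div h0 (ne_of_gt hrb), hech,
          Real.log_mul (ne_of_gt hra) (ne_of_gt hpf)]
        ring
    have hT1 : ∀ a : GState D, (∑ b : GState D, ech PF a b * Real.log (rch PF a))
        = if IsTerminal a then 0 else rch PF a * Real.log (rch PF a) := by
      intro a
      rw [← Finset.sum_mul]
      by_cases ha : IsTerminal a
      · rw [if_pos ha,
          Finset.sum_eq_zero fun b _ => ech_eq_zero_of_not_isChild PF ha.not_isChild,
          zero_mul]
      · rw [if_neg ha, sum_ech_succ PF ha]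
    have hT2 : ∀ b : GState D, (∑ a : GState D, ech PF a b * Real.log (rch PF b))
        = if b = initState D then 0 else rch PF b * Real.log (rch PF b) := by
      intro b
      rw [← Finset.sum_mul]
      by_cases hb : b = initState D
      · subst hb
        rw [if_pos rfl,
          Finset.sum_eq_zero fun a _ => ech_eq_zero_of_not_isChild PF not_isChild_initState,
          zero_mul]
      · rw [if_neg hb, sum_ech_pred PF hb]
    have hΔ : (∑ a : GState D, ∑ b : GState D, ech PF a b * (- Real.log (PF a b)))
        - (∑ a : GState D, ∑ b : GState D,
            ech PF a b * (- Real.log (ech PF a b / rch PF b)))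
        = - ∑ x : Fin D → Bool, rch PF (ofX x) * Real.log (rch PF (ofX x)) := by
      calc (∑ a : GState D, ∑ b : GState D, ech PF a b * (- Real.log (PF a b)))
          - (∑ a : GState D, ∑ b : GState D,
              ech PF a b * (- Real.log (ech PF a b / rch PF b)))
          = ∑ a : GState D, ∑ b : GState D,
              (ech PF a b * (- Real.log (PF a b))
                - ech PF a b * (- Real.log (ech PF a b / rch PF b))) := by
            rw [← Finset.sum_sub_distrib]
            exact Finset.sum_congr rfl fun a _ => by rw [← Finset.sum_sub_distrib]
        _ = ∑ a : GState D, ∑ b : GState D,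
              (ech PF a b * Real.log (rch PF a) - ech PF a b * Real.log (rch PF b)) :=
            Finset.sum_congr rfl fun a _ => Finset.sum_congr rfl fun b _ => hC a b
        _ = (∑ a : GState D, ∑ b : GState D, ech PF a b * Real.log (rch PF a))
            - ∑ a : GState D, ∑ b : GState D, ech PF a b * Real.log (rch PF b) := by
            rw [← Finset.sum_sub_distrib]
            exact Finset.sum_congr rfl fun a _ => Finset.sum_sub_distrib _ _
        _ = (∑ a : GState D, if IsTerminal a then 0 else rch PF a * Real.log (rch PF a))
            - ∑ b : GState D,
                if b = initState D then 0 else rch PF b * Real.log (rch PF b) := by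
            rw [Finset.sum_congr rfl fun a _ => hT1 a, Finset.sum_comm,
              Finset.sum_congr rfl fun b _ => hT2 b]
        _ = (∑ a : GState D,
              if a = initState D then rch PF a * Real.log (rch PF a) else 0)
            - ∑ a : GState D,
                if IsTerminal a then rch PF a * Real.log (rch PF a) else 0 := by
            rw [← Finset.sum_sub_distrib, ← Finset.sum_sub_distrib]
            refine Finset.sum_congr rfl fun a _ => ?_
            by_cases h1 : IsTerminal a
            · have h2 : a ≠ initState D := by
                intro h
                rw [h] at h1
                exact (initState_not_terminal hD) h1
              rw [if_pos h1, if_neg h2, if_neg h2, if_pos h1]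
            · by_cases h2 : a = initState D
              · rw [if_neg h1, if_pos h2, if_pos h2, if_neg h1]
              · rw [if_neg h1, if_neg h2, if_neg h2, if_neg h1]
                ring
        _ = - ∑ x : Fin D → Bool, rch PF (ofX x) * Real.log (rch PF (ofX x)) := by
            have hinit : (∑ a : GState D,
                if a = initState D then rch PF a * Real.log (rch PF a) else 0) = 0 := by
              rw [Finset.sum_ite_eq' Finset.univ (initState D)
                (fun a => rch PF a * Real.log (rch PF a)), if_pos (Finset.mem_univ _),
                rch_init_eq_one PF hPF]
              simp
            have hterm : (∑ a : GState D,
                if IsTerminal a then rch PF a * Real.log (rch PF a) else 0)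
                = ∑ x : Fin D → Bool, rch PF (ofX x) * Real.log (rch PF (ofX x)) := by
              rw [← Finset.sum_filter]
              have himg : Finset.univ.filter (fun a : GState D => IsTerminal a)
                  = Finset.univ.image ofX := by
                ext a
                simp only [Finset.mem_filter, Finset.mem_univ, true_and, Finset.mem_image]
                rw [isTerminal_iff_ofX]
                exact exists_congr fun x => eq_comm
              rw [himg, Finset.sum_image fun x _ y _ h => ofX_injective h]
            rw [hinit, hterm]
            ring
    have hlast : (1 / Z) * ∑ x : Fin D → Bool,
        stateFlow PF Z (ofX x) * Real.log (stateFlow PF Z (ofX x))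
        = Real.log Z
          + ∑ x : Fin D → Bool, rch PF (ofX x) * Real.log (rch PF (ofX x)) := by
      have hx : ∀ x : Fin D → Bool,
          stateFlow PF Z (ofX x) * Real.log (stateFlow PF Z (ofX x))
          = Z * (rch PF (ofX x) * Real.log Z
              + rch PF (ofX x) * Real.log (rch PF (ofX x))) := by
        intro x
        rw [stateFlow_eq, Real.log_mul hZne (ne_of_gt (rch_pos PF hFpos _))]
        ring
      rw [Finset.sum_congr rfl fun x _ => hx x, ← Finset.mul_sum, ← mul_assoc, one_div,
        inv_mul_cancel₀ hZne, one_mul, Finset.sum_add_distrib, ← Finset.sum_mul,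
        sum_rch_ofX, sum_compF_eq_one PF hPF, one_mul]
    rw [hA, hB, hlast]
    linarith [hΔ]
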